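/- Let n ≥ 2 and let c = (c_1, …, c_n) be an admissible sequence, i.e. positive integers with c_j ≤ c_{j+1} + 1 for 1 ≤ j ≤ n−1, c_n ≤ c_1 + 1, and c_j ≥ 2 for all j. Define c′_j = c_j − ⌊(c_j + j − 1)/n⌋ for 1 ≤ j ≤ n−1. Then c′ satisfies: c′_j ≥ 1 for all j, c′_j ≤ c′_{j+1} + 1 for 1 ≤ j ≤ n−2, and c′_{n−1} ≤ c′_1 + 1. -/
import Mathlib


/-- the derived sequence of an admissible sequence is admissible. -/
theorem admissible_derived_sequence
    (n : ℕ) (hn : 2 ≤ n) (c : ℕ → ℕ)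
    (hadm1 : ∀ j, 1 ≤ j → j ≤ n → 2 ≤ c j)
    (hadm2 : ∀ j, 1 ≤ j → j ≤ n - 1 → c j ≤ c (j + 1) + 1)
    (hadm3 : c n ≤ c 1 + 1)
    (c' : ℕ → ℕ)
    (hc' : ∀ j, 1 ≤ j → j ≤ n - 1 → c' j = c j - (c j + j - 1) / n) :
    (∀ j, 1 ≤ j → j ≤ n - 1 → 1 ≤ c' j) ∧
    (∀ j, 1 ≤ j → j ≤ n - 2 → c' j ≤ c' (j + 1) + 1) ∧
    c' (n - 1) ≤ c' 1 + 1 := by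
  have hn0 : 0 < n := by omega
  have key : ∀ m d : ℕ, (m + d) / n ≤ m / n + d := by
    intro m d
    calc (m + d) / n ≤ (m + d * n) / n :=
          Nat.div_le_div_right (by nlinarith)
      _ = m / n + d := Nat.add_mul_div_right m d hn0
  have hbound : ∀ j, 1 ≤ j → j ≤ n - 1 → (c j + j - 1) / n + 1 ≤ c j := by
    intro j h1 h2
    have hc2 := hadm1 j h1 (by omega)
    have hj : j + 1 ≤ n := by omega
    have hsplit : c j * (n - 2) + c j * 2 = c j * n := by
      rw [← Nat.mul_add]
      congr 1
      omega
    have hge : n - 2 ≤ c j * (n - 2) := Nat.le_mul_of_pos_left _ (by omega)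
    have hmul : c j + n ≤ c j * n + 1 := by omega
    have hlt : (c j + j - 1) / n < c j := by
      rw [Nat.div_lt_iff_lt_mul hn0]
      omega
    omega
  refine ⟨?_, ?_, ?_⟩
  · intro j h1 h2
    rw [hc' j h1 h2]
    have := hbound j h1 h2
    omega
  · intro j h1 h2
    have h2' : j ≤ n - 1 := by omega
    have h3 : j + 1 ≤ n - 1 := by omega
    rw [hc' j h1 h2', hc' (j + 1) (by omega) h3]
    have ha := hadm2 j h1 h2'
    have ha2 := hadm1 j h1 (by omega)
    have hb1 := hbound (j + 1) (by omega) h3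
    have hk := key (c j + j - 1) (c (j + 1) + 1 - c j)
    have heq : c (j + 1) + (j + 1) - 1 = (c j + j - 1) + (c (j + 1) + 1 - c j) := by
      omega
    rw [heq] at hb1 ⊢
    omega
  · have h1 : (1 : ℕ) ≤ n - 1 := by omega
    rw [hc' (n - 1) (by omega) le_rfl, hc' 1 le_rfl h1]
    have ha := hadm2 (n - 1) (by omega) le_rfl
    have hn' : n - 1 + 1 = n := by omega
    rw [hn'] at ha
    have ha2 := hadm1 (n - 1) (by omega) (by omega)
    have hb1 := hbound 1 le_rfl h1
    have hb2 := hbound (n - 1) (by omega) le_rfl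
    have heq1 : c 1 + 1 - 1 = c 1 := by omega
    rw [heq1] at hb1 ⊢
    have hk := key (c (n - 1) + (n - 1) - 1) (c 1 + 2 - c (n - 1))
    have heq2 : (c (n - 1) + (n - 1) - 1) + (c 1 + 2 - c (n - 1)) = c 1 + n := by
      omega
    rw [heq2] at hk
    have hdiv : (c 1 + n) / n = c 1 / n + 1 := Nat.add_div_right _ hn0
    omega
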